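/- Suppose the 5×5 symmetric tridiagonal matrix H with zero diagonal and couplings (J₁, J₂, J₂, J₁), J₁, J₂ > 0, exhibits perfect state transfer at time t₀ > 0. Then J₁ ≥ π/t₀. -/

import Mathlib

open Matrix

noncomputable def Qr (a b c : ℝ) : Matrix (Fin 5) (Fin 5) ℝ :=
  !![b/c, 1/2, 1/2, a/(2*c), a/(2*c);
     0, 1/2, (-1)/2, 1/2, (-1)/2;
     (-a)/c, 0, 0, b/c, b/c;
     0, (-1)/2, 1/2, 1/2, (-1)/2;
     b/c, (-1)/2, (-1)/2, a/(2*c), a/(2*c)]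

noncomputable def Qtr (a b c : ℝ) : Matrix (Fin 5) (Fin 5) ℝ :=
  !![b/c, 0, (-a)/c, 0, b/c;
     1/2, 1/2, 0, (-1)/2, (-1)/2;
     1/2, (-1)/2, 0, 1/2, (-1)/2;
     a/(2*c), 1/2, b/c, 1/2, a/(2*c);
     a/(2*c), (-1)/2, b/c, (-1)/2, a/(2*c)]

noncomputable def dvec (a c : ℝ) : Fin 5 → ℝ := ![0, a, -a, c, -c]

set_option maxHeartbeats 2000000 in
theorem QtQ (a b c : ℝ) (hc : 0 < c) (hc2 : c^2 = a^2 + 2*b^2) :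
    (Qtr a b c) * (Qr a b c) = 1 := by
  have hcC : c ≠ 0 := hc.ne'
  have h4 : c^2*a^2 + 2*(c^2*b^2) = c^4 := by nlinarith [hc2]
  have h6 : c^4*a^2 + 2*(c^4*b^2) = c^6 := by nlinarith [hc2, h4]
  have h8 : c^6*a^2 + 2*(c^6*b^2) = c^8 := by nlinarith [hc2, h6]
  ext i j
  fin_cases i <;> fin_cases j <;>
    simp only [Qr, Qtr, Matrix.mul_apply, Matrix.of_apply, Fin.sum_univ_five,
      Matrix.cons_val_zero, Matrix.cons_val_one, Matrix.head_cons, Matrix.cons_val_two,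
      Matrix.tail_cons, Matrix.cons_val_three, Matrix.cons_val_four, Matrix.head_fin_const,
      Matrix.one_apply, Fin.mk_zero, Fin.mk_one, show (⟨2,by norm_num⟩ : Fin 5) = 2 from rfl,
      show (⟨3,by norm_num⟩ : Fin 5) = 3 from rfl, show (⟨4,by norm_num⟩ : Fin 5) = 4 from rfl,
      ite_true, ite_false, reduceIte, Fin.reduceEq] <;>
    field_simp <;> (first | ring1 | nlinarith [hc2, h4, h6, h8])

set_option maxHeartbeats 2000000 in
theorem HQD (a b c : ℝ) (hc : 0 < c) (hc2 : c^2 = a^2 + 2*b^2) :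
    Qr a b c * Matrix.diagonal (dvec a c) * Qtr a b c =
      !![0, a, 0, 0, 0; a, 0, b, 0, 0; 0, b, 0, b, 0; 0, 0, b, 0, a; 0, 0, 0, a, 0] := by
  have hcC : c ≠ 0 := hc.ne'
  ext i j
  fin_cases i <;> fin_cases j <;>
    simp only [Qr, Qtr, dvec, Matrix.mul_apply, Matrix.mul_diagonal, Matrix.of_apply,
      Fin.sum_univ_five,
      Matrix.cons_val_zero, Matrix.cons_val_one, Matrix.head_cons, Matrix.cons_val_two,
      Matrix.tail_cons, Matrix.cons_val_three, Matrix.cons_val_four, Matrix.head_fin_const,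
      Fin.mk_zero, Fin.mk_one, show (⟨2,by norm_num⟩ : Fin 5) = 2 from rfl,
      show (⟨3,by norm_num⟩ : Fin 5) = 3 from rfl, show (⟨4,by norm_num⟩ : Fin 5) = 4 from rfl,
      Matrix.diagonal_apply, ite_true, ite_false, reduceIte,
      Fin.reduceEq] <;>
    field_simp <;> ring1

theorem expQDQt (w : Fin 5 → ℂ) (Q Qt : Matrix (Fin 5) (Fin 5) ℂ)
    (hQtQ : Qt * Q = 1) :
    NormedSpace.exp (Q * Matrix.diagonal w * Qt) =
      Q * Matrix.diagonal (fun k => Complex.exp (w k)) * Qt := by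
  have hQQ : Q * Qt = 1 := mul_eq_one_comm.mpr hQtQ
  have hdet : IsUnit Q.det := by
    apply IsUnit.of_mul_eq_one Qt.det
    rw [← Matrix.det_mul, hQQ, Matrix.det_one]
  have hU : IsUnit Q := (Matrix.isUnit_iff_isUnit_det Q).mpr hdet
  have hinv : Q⁻¹ = Qt := Matrix.inv_eq_left_inv hQtQ
  rw [← hinv, Matrix.exp_conj Q _ hU, Matrix.exp_diagonal, hinv]
  congr 2
  funext k
  rw [Pi.exp_def, Complex.exp_eq_exp_ℂ]

/-- If the 5×5 symmetric tridiagonal matrix with zero diagonal and couplings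
`(J₁, J₂, J₂, J₁)`, `J₁, J₂ > 0`, exhibits perfect state transfer at time `t₀ > 0`
(the `(5,1)` entry of `e^{-iHt₀}` has modulus 1), then `J₁ ≥ π/t₀`. -/
theorem stmt3 (J1 J2 t₀ : ℝ) (hJ1 : 0 < J1) (hJ2 : 0 < J2) (ht₀ : 0 < t₀)
    (H : Matrix (Fin 5) (Fin 5) ℂ)
    (hH : H = !![0, (J1:ℂ), 0, 0, 0; (J1:ℂ), 0, (J2:ℂ), 0, 0;
                 0, (J2:ℂ), 0, (J2:ℂ), 0; 0, 0, (J2:ℂ), 0, (J1:ℂ);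
                 0, 0, 0, (J1:ℂ), 0])
    (hPST : ‖(NormedSpace.exp ((-(Complex.I * t₀)) • H)) 4 0‖ = 1) :
    J1 ≥ Real.pi / t₀ := by
  set a := J1
  set b := J2
  set c := Real.sqrt (a^2 + 2*b^2) with hcdef
  have hcsq : c^2 = a^2 + 2*b^2 := Real.sq_sqrt (by positivity)
  have hc : 0 < c := Real.sqrt_pos.mpr (by positivity)
  have hcC : (c:ℂ) ≠ 0 := by exact_mod_cast hc.ne'
  -- complex versions
  set f := (Complex.ofRealHom : ℝ →+* ℂ)
  set Qc : Matrix (Fin 5) (Fin 5) ℂ := (Qr a b c).map f with hQc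
  set Qtc : Matrix (Fin 5) (Fin 5) ℂ := (Qtr a b c).map f with hQtc
  have hQtQc : Qtc * Qc = 1 := by
    rw [hQc, hQtc, ← Matrix.map_mul, QtQ a b c hc hcsq]
    exact Matrix.map_one _ (map_zero f) (map_one f)
  -- H in diagonalized form
  have hHd : H = Qc * Matrix.diagonal (fun k => f (dvec a c k)) * Qtc := by
    have := congrArg (fun M : Matrix (Fin 5) (Fin 5) ℝ => M.map f) (HQD a b c hc hcsq)
    simp only [Matrix.map_mul] at this
    rw [Matrix.diagonal_map (map_zero f)] at this
    rw [hQc, hQtc, this, hH]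
    ext i j
    fin_cases i <;> fin_cases j <;> simp [Matrix.map_apply, f, Matrix.vecHead, Matrix.vecTail]
  -- the scalar multiple
  have hsmul : (-(Complex.I * t₀)) • H =
      Qc * Matrix.diagonal (fun k => (-(Complex.I * t₀)) * f (dvec a c k)) * Qtc := by
    rw [hHd]
    have h1 : (fun k => (-(Complex.I * t₀)) * f (dvec a c k))
        = (-(Complex.I * t₀)) • (fun k => f (dvec a c k)) := by
      funext k; simp [smul_eq_mul]
    rw [h1, Matrix.diagonal_smul, Matrix.mul_smul, Matrix.smul_mul]
  -- exponential
  have hexp : NormedSpace.exp ((-(Complex.I * t₀)) • H) =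
      Qc * Matrix.diagonal
        (fun k => Complex.exp ((-(Complex.I * t₀)) * f (dvec a c k))) * Qtc := by
    rw [hsmul, expQDQt _ _ _ hQtQc]
  rw [hexp] at hPST
  have h40 : (Qc * Matrix.diagonal
        (fun k => Complex.exp ((-(Complex.I * t₀)) * f (dvec a c k))) * Qtc) 4 0
      = ((b^2/c^2 - Real.cos (a*t₀)/2 + (a^2/(2*c^2)) * Real.cos (c*t₀) : ℝ) : ℂ) := by
    simp only [hQc, hQtc, Qr, Qtr, dvec, Matrix.mul_apply, Matrix.mul_diagonal,
      Matrix.map_apply, Matrix.of_apply, Fin.sum_univ_five,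
      Matrix.cons_val_zero, Matrix.cons_val_one, Matrix.head_cons, Matrix.cons_val_two,
      Matrix.tail_cons, Matrix.cons_val_three, Matrix.cons_val_four, Matrix.head_fin_const,
      Matrix.diagonal_apply, Fin.reduceEq, reduceIte, ite_true, ite_false,
      mul_zero, zero_mul, add_zero, zero_add, mul_one, one_mul]
    have hpair : ∀ x : ℝ, Complex.exp (-(Complex.I * ↑t₀) * (x:ℂ))
        + Complex.exp (-(Complex.I * ↑t₀) * (-(x:ℂ)))
        = 2 * ((Real.cos (x * t₀) : ℝ) : ℂ) := by
      intro x
      have h1 : -(Complex.I * ↑t₀) * (x:ℂ) = ((-(x*t₀):ℝ):ℂ) * Complex.I := by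
        push_cast; ring
      have h2 : -(Complex.I * ↑t₀) * (-(x:ℂ)) = (((x*t₀):ℝ):ℂ) * Complex.I := by
        push_cast; ring
      rw [h1, h2, Complex.exp_mul_I, Complex.exp_mul_I, Complex.ofReal_cos]
      push_cast
      rw [Complex.cos_neg, Complex.sin_neg]
      ring
    have e1 := hpair a
    have e2 := hpair c
    simp only [f, Complex.ofRealHom_eq_coe]
    push_cast
    push_cast at e1 e2
    rw [mul_zero, Complex.exp_zero]
    linear_combination (-(1:ℂ)/4) * e1 + ((a:ℂ)^2/(4*(c:ℂ)^2)) * e2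
  rw [h40, Complex.norm_real, Real.norm_eq_abs] at hPST
  -- real endgame
  set g := b^2/c^2 - Real.cos (a*t₀)/2 + (a^2/(2*c^2)) * Real.cos (c*t₀) with hg
  have hcos1 : Real.cos (a*t₀) = -1 := by
    have hca := Real.neg_one_le_cos (a*t₀)
    have hca' := Real.cos_le_one (a*t₀)
    have hcc := Real.neg_one_le_cos (c*t₀)
    have hcc' := Real.cos_le_one (c*t₀)
    have ha2c2 : a^2 < c^2 := by nlinarith
    have hc2pos : (0:ℝ) < c^2 := by positivity
    rcases abs_eq (by norm_num : (0:ℝ) ≤ 1) |>.mp hPST with h1 | h1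
    · -- g = 1 forces cos(a t₀) = -1
      have key : Real.cos (a*t₀) ≤ -1 := by
        rw [hg] at h1
        field_simp at h1
        have hq : c^2 * c^2 = c^2 * a^2 + 2*(c^2*b^2) := by linear_combination c^2 * hcsq
        nlinarith [h1, hq, mul_pos hc2pos hc2pos,
          mul_nonneg (mul_nonneg hc2pos.le (sq_nonneg a))
            (by linarith : (0:ℝ) ≤ 1 - Real.cos (c*t₀))]
      linarith
    · -- g = -1 is impossible
      exfalso
      rw [hg] at h1
      field_simp at h1
      have hq : c^2 * c^2 = c^2 * a^2 + 2*(c^2*b^2) := by linear_combination c^2 * hcsq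
      have hC : 0 < c^2 * b^2 := mul_pos hc2pos (by positivity)
      nlinarith [h1, hq, hC,
        mul_nonneg (mul_nonneg hc2pos.le (sq_nonneg a))
          (by linarith : (0:ℝ) ≤ 1 + Real.cos (c*t₀)),
        mul_nonneg (mul_nonneg hc2pos.le hc2pos.le)
          (by linarith : (0:ℝ) ≤ 1 - Real.cos (a*t₀))]
  -- cos(a t₀) = -1 implies a t₀ ≥ π
  obtain ⟨k, hk⟩ := Real.cos_eq_neg_one_iff.mp hcos1
  have hpi := Real.pi_pos
  have hat : Real.pi ≤ a * t₀ := by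
    rcases le_or_gt 0 k with hk0 | hk0
    · have : (0:ℝ) ≤ k := by exact_mod_cast hk0
      nlinarith [hk]
    · exfalso
      have hk1 : k ≤ -1 := by omega
      have : (k:ℝ) ≤ -1 := by exact_mod_cast hk1
      nlinarith [hk, mul_pos hJ1 ht₀]
  rw [ge_iff_le, div_le_iff₀ ht₀]
  linarith
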